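/- Let k be a field of characteristic zero that is algebraically closed, let f_i(x_i) = Π_{a ∈ A_i}(x_i - a)^{ν_i(a)} for i = 1,...,n, and let I = (f_1,...,f_n) ⊆ k[x_1,...,x_n]. Then for every polynomial f ∈ k[x_1,...,x_n], the polynomial F := Π_{a ∈ A_1×...×A_n} (f(x) - f(a))^{ν_1(a_1)+...+ν_n(a_n) - n + 1} lies in I. -/

import Mathlib

open MvPolynomial

-- Lemma 1
lemma aux_sub_eval_mem {σ R : Type*} [CommRing R] (a : σ → R) (f : MvPolynomial σ R) :
    f - C (eval a f) ∈ Ideal.span (Set.range fun i => (X i : MvPolynomial σ R) - C (a i)) := by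
  induction f using MvPolynomial.induction_on with
  | C c => simp
  | add p q hp hq =>
      have : p + q - C (eval a (p + q)) = (p - C (eval a p)) + (q - C (eval a q)) := by
        rw [eval_add, map_add]; ring
      rw [this]; exact Ideal.add_mem _ hp hq
  | mul_X p i hp =>
      have : p * X i - C (eval a (p * X i)) =
          p * (X i - C (a i)) + C (a i) * (p - C (eval a p)) := by
        rw [eval_mul, eval_X, map_mul]; ring
      rw [this]
      exact Ideal.add_mem _
        (Ideal.mul_mem_left _ _ (Ideal.subset_span ⟨i, rfl⟩))
        (Ideal.mul_mem_left _ _ hp)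

-- Lemma 2
lemma aux_pow_mem {σ R : Type*} [CommRing R] [Fintype σ] (d : σ → R) (ν : σ → ℕ)
    (hν : ∀ i, 1 ≤ ν i) {p : R}
    (hp : p ∈ Ideal.span (Set.range d)) :
    p ^ ((∑ i, ν i) - Fintype.card σ + 1) ∈ Ideal.span (Set.range fun i => d i ^ ν i) := by
  classical
  obtain ⟨q, hq⟩ := Ideal.mem_span_range_iff_exists_fun.mp hp
  set N := (∑ i, ν i) - Fintype.card σ + 1 with hN
  rw [← hq, Finset.sum_pow_eq_sum_piAntidiag]
  refine Ideal.sum_mem _ fun m hm => ?_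
  rw [Finset.mem_piAntidiag] at hm
  have hmsum : ∑ i, m i = N := hm.1
  -- pigeonhole: some i has ν i ≤ m i
  have hcard : ∑ i : σ, (1:ℕ) = Fintype.card σ := by simp
  have hge : Fintype.card σ ≤ ∑ i, ν i := by
    rw [← hcard]; exact Finset.sum_le_sum fun i _ => hν i
  obtain ⟨i, hi⟩ : ∃ i, ν i ≤ m i := by
    by_contra hcon
    push_neg at hcon
    have hle : ∑ i, m i + Fintype.card σ ≤ ∑ i, ν i := by
      rw [← hcard, ← Finset.sum_add_distrib]
      exact Finset.sum_le_sum fun i _ => hcon i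
    omega
  have hdvd : d i ^ ν i ∣ Nat.multinomial Finset.univ m * ∏ j, (q j * d j) ^ m j := by
    refine Dvd.dvd.mul_left ?_ _
    calc d i ^ ν i ∣ (q i * d i) ^ m i := by
          rw [mul_pow]
          exact Dvd.dvd.mul_left (pow_dvd_pow _ hi) _
      _ ∣ ∏ j, (q j * d j) ^ m j := Finset.dvd_prod_of_mem _ (Finset.mem_univ i)
  obtain ⟨c, hc⟩ := hdvd
  rw [hc]
  exact Ideal.mul_mem_right _ _ (Ideal.subset_span ⟨i, rfl⟩)

-- Lemma 3
lemma aux_prod_mem {R α β : Type*} [CommRing R] [Nonempty β] (S : Finset α)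
    (g : α → β → R) (h : α → R)
    (hh : ∀ a ∈ S, h a ∈ Ideal.span (Set.range (g a))) :
    ∏ a ∈ S, h a ∈ Ideal.span {p | ∃ c : α → β, p = ∏ a ∈ S, g a (c a)} := by
  classical
  induction S using Finset.induction_on with
  | empty =>
      simp only [Finset.prod_empty]
      exact Ideal.subset_span ⟨Classical.arbitrary _ |> fun b => fun _ => b, rfl⟩
  | @insert a0 S ha0 ih =>
      rw [Finset.prod_insert ha0]
      have h1 : h a0 * ∏ a ∈ S, h a ∈
          Ideal.span (Set.range (g a0)) *
            Ideal.span {p | ∃ c : α → β, p = ∏ a ∈ S, g a (c a)} :=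
        Ideal.mul_mem_mul (hh a0 (Finset.mem_insert_self a0 S))
          (ih fun a ha => hh a (Finset.mem_insert_of_mem ha))
      rw [Ideal.span_mul_span] at h1
      refine Ideal.span_le.mpr ?_ h1
      rintro x hx
      simp only [Set.mem_mul, Set.mem_range,
        Set.mem_setOf_eq] at hx
      obtain ⟨u, ⟨b, rfl⟩, v, ⟨c, rfl⟩, rfl⟩ := hx
      refine Ideal.subset_span ⟨Function.update c a0 b, ?_⟩
      rw [Finset.prod_insert ha0, Function.update_self]
      congr 1
      refine Finset.prod_congr rfl fun a ha => ?_
      have hne : a ≠ a0 := fun hh2 => ha0 (hh2 ▸ ha)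
      rw [Function.update_of_ne hne]

theorem stmt_5 (k : Type*) [Field k] [CharZero k] [IsAlgClosed k] (n : ℕ)
    (A : Fin n → Finset k) (ν : Fin n → k → ℕ) (hν : ∀ i, ∀ a ∈ A i, 1 ≤ ν i a)
    (I : Ideal (MvPolynomial (Fin n) k))
    (hI : I = Ideal.span (Set.range fun i =>
      ∏ a ∈ A i, (MvPolynomial.X i - MvPolynomial.C a) ^ ν i a))
    (f : MvPolynomial (Fin n) k) :
    (∏ a ∈ Fintype.piFinset A,
        (f - MvPolynomial.C (MvPolynomial.eval a f)) ^ ((∑ i, ν i (a i)) - n + 1)) ∈ I := by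
  classical
  by_cases hA : ∀ i, (A i).Nonempty
  · rcases Nat.eq_zero_or_pos n with hn | hn
    · subst hn
      obtain ⟨c, rfl⟩ := MvPolynomial.C_surjective (Fin 0) f
      have hmem : (fun i => i.elim0 : Fin 0 → k) ∈ Fintype.piFinset A :=
        Fintype.mem_piFinset.mpr fun i => i.elim0
      rw [Finset.prod_eq_zero hmem (by simp)]
      exact I.zero_mem
    · haveI : Nonempty (Fin n) := ⟨⟨0, hn⟩⟩
      set g : (Fin n → k) → Fin n → MvPolynomial (Fin n) k :=
        fun a i => (X i - C (a i)) ^ ν i (a i) with hg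
      have hstep : ∀ a ∈ Fintype.piFinset A,
          (f - C (eval a f)) ^ ((∑ i, ν i (a i)) - n + 1) ∈
            Ideal.span (Set.range (g a)) := by
        intro a ha
        have h2 := aux_pow_mem (fun i => (X i : MvPolynomial (Fin n) k) - C (a i))
          (fun i => ν i (a i))
          (fun i => hν i (a i) ((Fintype.mem_piFinset.mp ha) i))
          (aux_sub_eval_mem a f)
        simpa [Fintype.card_fin] using h2
      have hmain := aux_prod_mem (Fintype.piFinset A) g _ hstep
      refine Ideal.span_le.mpr ?_ hmain
      rintro p ⟨c, rfl⟩
      obtain ⟨i, hi⟩ : ∃ i, ∀ b ∈ A i,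
          ∃ a ∈ Fintype.piFinset A, a i = b ∧ c a = i := by
        by_contra hcon
        push_neg at hcon
        choose b hb hcb using hcon
        have hbmem : b ∈ Fintype.piFinset A := Fintype.mem_piFinset.mpr hb
        exact hcb (c b) b hbmem rfl rfl
      choose e hemem heval hec using hi
      set e' : k → (Fin n → k) :=
        fun x => if hx : x ∈ A i then e x hx else Classical.arbitrary _ with he'
      have he'val : ∀ b ∈ A i, e' b i = b := by
        intro b hb; rw [he']; simp only [dif_pos hb]; exact heval b hb
      have hinj : ∀ x ∈ A i, ∀ y ∈ A i, e' x = e' y → x = y := by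
        intro x hx y hy hxy
        rw [← he'val x hx, ← he'val y hy, hxy]
      have key : (∏ b ∈ A i, ((X i : MvPolynomial (Fin n) k) - C b) ^ ν i b) ∣
          ∏ a ∈ Fintype.piFinset A, g a (c a) := by
        have hsub : (A i).image e' ⊆ Fintype.piFinset A := by
          intro x hx
          obtain ⟨b, hb, rfl⟩ := Finset.mem_image.mp hx
          rw [he']; simp only [dif_pos hb]; exact hemem b hb
        calc (∏ b ∈ A i, ((X i : MvPolynomial (Fin n) k) - C b) ^ ν i b)
            = ∏ a ∈ (A i).image e', g a (c a) := by
              rw [Finset.prod_image hinj]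
              refine Finset.prod_congr rfl fun b hb => ?_
              have hcb : c (e' b) = i := by
                rw [he']; simp only [dif_pos hb]; exact hec b hb
              rw [hg]; simp only [hcb, he'val b hb]
          _ ∣ ∏ a ∈ Fintype.piFinset A, g a (c a) :=
              Finset.prod_dvd_prod_of_subset _ _ _ hsub
      obtain ⟨q, hq⟩ := key
      rw [hq, hI]
      exact Ideal.mul_mem_right _ _ (Ideal.subset_span ⟨i, rfl⟩)
  · push_neg at hA
    obtain ⟨i, hAi⟩ := hA
    have h1 : (1 : MvPolynomial (Fin n) k) ∈ I := by
      rw [hI]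
      exact Ideal.subset_span ⟨i, by simp only [hAi, Finset.prod_empty]⟩
    have : I = ⊤ := (Ideal.eq_top_iff_one I).mpr h1
    rw [this]; trivial
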